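/- The restriction map $R : H(\mathbb{R}^{\mathbb{N}}) \to H(\Delta_{\mathbb{N}})$ is not surjective: the function $g(\xi) = \sum_{k=1}^{\infty} 2^{-k} \xi(k)$ belongs to $H(\Delta_{\mathbb{N}})$ but is not the restriction of any continuous homogeneous function on $\mathbb{R}^{\mathbb{N}}$. -/
import Mathlib


open Set

/-- the restriction map `H(ℝ^ℕ) → H(Δ_ℕ)` is not surjective:
`g ξ = ∑ₖ 2^{-k} ξ(k)` belongs to `H(Δ_ℕ)` but is not the restriction of any
continuous homogeneous function on `ℝ^ℕ`. -/
theorem stmt_10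
    (D : Set (ℕ → ℝ)) (hD : D = {ξ : ℕ → ℝ | ∀ k, |ξ k| ≤ 1})
    (g : (ℕ → ℝ) → ℝ) (hg : ∀ ξ, g ξ = ∑' k : ℕ, ξ k / 2 ^ (k + 1)) :
    (ContinuousOn g D ∧
      ∀ t : ℝ, t ∈ Icc (0 : ℝ) 1 → ∀ ξ ∈ D, t • ξ ∈ D ∧ g (t • ξ) = t * g ξ) ∧
    ¬ ∃ f : (ℕ → ℝ) → ℝ, Continuous f ∧
        (∀ t : ℝ, 0 ≤ t → ∀ ξ : ℕ → ℝ, f (t • ξ) = t * f ξ) ∧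
        ∀ ξ ∈ D, f ξ = g ξ := by
  have hsum : Summable (fun k : ℕ => (1 : ℝ) / 2 ^ (k + 1)) := by
    have : Summable (fun k : ℕ => ((1:ℝ)/2) ^ k * (1/2)) :=
      (summable_geometric_of_lt_one (by norm_num) (by norm_num)).mul_right _
    refine this.congr fun k => ?_
    rw [← pow_succ]
    simp [div_pow]
  constructor
  · constructor
    · have : ContinuousOn (fun ξ : ℕ → ℝ => ∑' k : ℕ, ξ k / 2 ^ (k + 1)) D := by
        refine continuousOn_tsum (f := fun k (ξ : ℕ → ℝ) => ξ k / 2 ^ (k + 1))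
          (u := fun k => (1:ℝ) / 2 ^ (k + 1))
          (fun k => ((continuous_apply k).div_const _).continuousOn) hsum ?_
        intro n x hx
        rw [hD] at hx
        have h1 : |x n| ≤ 1 := hx n
        have h2 : (0:ℝ) < 2 ^ (n+1) := by positivity
        rw [Real.norm_eq_abs, abs_div, abs_of_pos h2]
        exact (div_le_div_iff_of_pos_right h2).mpr h1
      exact (funext hg : g = _) ▸ this
    · intro t ht ξ hξ
      rw [hD] at hξ ⊢
      constructor
      · intro k
        have : |t * ξ k| = |t| * |ξ k| := abs_mul _ _
        simp only [Pi.smul_apply, smul_eq_mul]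
        calc |t * ξ k| = |t| * |ξ k| := abs_mul _ _
          _ ≤ 1 * 1 := by
              apply mul_le_mul _ (hξ k) (abs_nonneg _) zero_le_one
              rw [abs_of_nonneg ht.1]; exact ht.2
          _ = 1 := one_mul 1
      · rw [hg, hg, ← tsum_mul_left]
        congr 1; funext k
        simp [Pi.smul_apply, mul_div_assoc]
  · rintro ⟨f, hfc, hfh, hfg⟩
    -- f 0 = 0
    have hf0 : f 0 = 0 := by
      have := hfh 0 le_rfl 0
      simpa using this
    -- e n : indicator
    set e : ℕ → (ℕ → ℝ) := fun n k => if k = n then 1 else 0 with he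
    have heD : ∀ n, e n ∈ D := by
      intro n; rw [hD]; intro k
      by_cases h : k = n <;> simp [he, h]
    have hge : ∀ n, g (e n) = 1 / 2 ^ (n + 1) := by
      intro n
      rw [hg]
      rw [tsum_eq_single n]
      · simp [he]
      · intro b hb; simp [he, hb]
    -- sequence φ n = (n * 2^(n+1)) • e n  tends to 0 pointwise
    set φ : ℕ → (ℕ → ℝ) := fun n => ((n : ℝ) * 2 ^ (n + 1)) • e n with hφ
    have hφ0 : Filter.Tendsto φ Filter.atTop (nhds 0) := by
      rw [tendsto_pi_nhds]
      intro k
      apply Filter.Tendsto.congr' (f₁ := fun _ => (0:ℝ))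
      · filter_upwards [Filter.eventually_gt_atTop k] with n hn
        have : k ≠ n := hn.ne
        simp [hφ, he, this]
      · simpa using tendsto_const_nhds
    have hfφ : ∀ n, f (φ n) = (n : ℝ) := by
      intro n
      have hnn : (0:ℝ) ≤ (n : ℝ) * 2 ^ (n + 1) := by positivity
      rw [hφ]
      rw [hfh _ hnn, hfg _ (heD n), hge n]
      field_simp
    have htend : Filter.Tendsto (fun n => f (φ n)) Filter.atTop (nhds 0) := by
      rw [← hf0]
      exact (hfc.tendsto 0).comp hφ0
    have : Filter.Tendsto (fun n : ℕ => (n:ℝ)) Filter.atTop (nhds 0) := by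
      simpa [hfφ] using htend
    exact not_tendsto_nhds_of_tendsto_atTop tendsto_natCast_atTop_atTop 0 this
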